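/- Let g ≥ 3 be an odd integer. Let D_{2g} be the dihedral group of order 4g with rotation ρ of order 2g and reflection z (Mathlib's DihedralGroup (2g)), and let φ be the involutive automorphism of D_{2g} given by φ(ρ) = ρ⁻¹ and φ(z) = ρ^{g−1}z. Then in the semidirect product G* = D_{2g} ⋊_φ C₂ (of order 8g), with x denoting the generator of the C₂ factor, the element (xz)^g is a central element of order 2, and G* is isomorphic to the direct product D_{2g} × C₂ of the dihedral group of order 4g with a cyclic group of order 2. -/

import Mathlib

/-- Let `g ≥ 3` be odd, let `φ` be the involutive automorphism of `DihedralGroup (2g)` given by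
`φ(ρ^k) = ρ^{−k}`, `φ(ρ^k z) = ρ^{g−1−k} z` (where `ρ = r 1`, `z = sr 0`), and let `ψ` be the
corresponding homomorphism `C₂ →* Aut(D_{2g})`. Then in the semidirect product
`G* = D_{2g} ⋊[ψ] C₂` (of order `8g`), with `x` the generator of the `C₂` factor and
`z = sr 0`, the element `(xz)^g` is a central element of order 2, and `G*` is isomorphic to
the direct product `D_{2g} × C₂`. -/
theorem semidirect_product_is_direct_product_of_odd
    (g : ℕ) (hg : 3 ≤ g) (hgodd : Odd g)
    (φ : DihedralGroup (2 * g) ≃* DihedralGroup (2 * g))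
    (hφr : ∀ k : ZMod (2 * g), φ (DihedralGroup.r k) = DihedralGroup.r (-k))
    (hφs : ∀ k : ZMod (2 * g), φ (DihedralGroup.r k * DihedralGroup.sr 0) =
      DihedralGroup.r ((g : ZMod (2 * g)) - 1 - k) * DihedralGroup.sr 0)
    (ψ : Multiplicative (ZMod 2) →* MulAut (DihedralGroup (2 * g)))
    (hψ : ψ (Multiplicative.ofAdd 1) = φ)
    (x : DihedralGroup (2 * g) ⋊[ψ] Multiplicative (ZMod 2))
    (hx : x = SemidirectProduct.inr (Multiplicative.ofAdd 1))
    (z : DihedralGroup (2 * g) ⋊[ψ] Multiplicative (ZMod 2))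
    (hz : z = SemidirectProduct.inl (DihedralGroup.sr 0)) :
    orderOf ((x * z) ^ g) = 2 ∧
    (x * z) ^ g ∈ Subgroup.center (DihedralGroup (2 * g) ⋊[ψ] Multiplicative (ZMod 2)) ∧
    Nonempty ((DihedralGroup (2 * g) ⋊[ψ] Multiplicative (ZMod 2)) ≃*
      DihedralGroup (2 * g) × Multiplicative (ZMod 2)) := by
  classical
  obtain ⟨m, hm⟩ := hgodd
  set G : ZMod (2 * g) := (g : ZMod (2 * g)) with hGdef
  set X : Multiplicative (ZMod 2) := Multiplicative.ofAdd 1 with hXdef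
  have h2G : (2 : ZMod (2 * g)) * G = 0 := by
    have := ZMod.natCast_self (2 * g)
    push_cast at this
    linear_combination this
  have hgm : G = 2 * (m : ZMod (2 * g)) + 1 := by
    rw [hGdef, hm]; push_cast; ring
  set c : ZMod (2 * g) := 1 - G - (m : ZMod (2 * g)) * (G - 1) with hcdef
  have h2c : 2 * c = 1 - G := by
    rw [hcdef]
    linear_combination (-(m : ZMod (2 * g))) * h2G - hgm
  -- φ on reflections
  have hφs' : ∀ b : ZMod (2 * g), φ (DihedralGroup.sr b) = DihedralGroup.sr (1 - G - b) := by
    intro b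
    have h := hφs (-b)
    rw [DihedralGroup.r_mul_sr, DihedralGroup.r_mul_sr] at h
    rw [show (0 : ZMod (2 * g)) - -b = b by ring] at h
    rw [h]
    congr 1
    ring
  have hsrc : DihedralGroup.sr c * DihedralGroup.sr c = (1 : DihedralGroup (2 * g)) := by
    rw [DihedralGroup.sr_mul_sr, DihedralGroup.one_def, sub_self]
  have hconj : ∀ n : DihedralGroup (2 * g),
      φ n = DihedralGroup.sr c * n * DihedralGroup.sr c := by
    rintro (k | k)
    · rw [hφr, DihedralGroup.sr_mul_r, DihedralGroup.sr_mul_sr]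
      congr 1
      ring
    · rw [hφs', DihedralGroup.sr_mul_sr, DihedralGroup.r_mul_sr]
      congr 1
      linear_combination -h2c
  have hrpow : ∀ (k : ℕ) (a : ZMod (2 * g)),
      (DihedralGroup.r a) ^ k = DihedralGroup.r ((k : ZMod (2 * g)) * a) := by
    intro k a
    induction k with
    | zero => rw [pow_zero, Nat.cast_zero, zero_mul, DihedralGroup.one_def]
    | succ n ih =>
      rw [pow_succ, ih, DihedralGroup.r_mul_r]
      congr 1
      push_cast
      ring
  have he : ∀ e : Multiplicative (ZMod 2), e = 1 ∨ e = X := by decide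
  have hXX : X * X = 1 := by decide
  -- computation of x*z and its powers
  have hxz : x * z = ⟨DihedralGroup.sr (1 - G), X⟩ := by
    rw [hx, hz]
    ext
    · simp [hψ, hφs']
    · simp
  have hxz2 : (x * z) ^ 2 = SemidirectProduct.inl (DihedralGroup.r (G - 1)) := by
    rw [sq, hxz]
    ext
    · show DihedralGroup.sr (1 - G) * (ψ X) (DihedralGroup.sr (1 - G)) = _
      rw [hψ, hφs', DihedralGroup.sr_mul_sr]
      show _ = DihedralGroup.r (G - 1)
      congr 1
      ring
    · show X * X = 1
      exact hXX
  have hxzg : (x * z) ^ g = ⟨DihedralGroup.sr c, X⟩ := by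
    have h1 : (x * z) ^ g = (x * z) ^ (2 * m + 1) := congrArg (HPow.hPow (x * z)) hm
    have h2 : (x * z) ^ (2 * m + 1) = ((x * z) ^ 2) ^ m * (x * z) := by
      rw [← pow_mul, ← pow_succ]
    rw [h1, h2, hxz2, ← map_pow, hrpow, hxz]
    ext
    · show DihedralGroup.r ((m : ZMod (2 * g)) * (G - 1)) *
        (ψ 1) (DihedralGroup.sr (1 - G)) = DihedralGroup.sr c
      rw [map_one]
      show DihedralGroup.r _ * DihedralGroup.sr (1 - G) = _
      rw [DihedralGroup.r_mul_sr]
    · show 1 * X = X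
      exact one_mul X
  have hφc : φ (DihedralGroup.sr c) = DihedralGroup.sr c := by
    rw [hφs']
    congr 1
    linear_combination -h2c
  -- the key commutation fact, in helper form
  have hmulform : ∀ n : DihedralGroup (2 * g),
      DihedralGroup.sr c * (DihedralGroup.sr c * n * DihedralGroup.sr c) =
        n * DihedralGroup.sr c := by
    intro n
    rw [← mul_assoc, ← mul_assoc, hsrc, one_mul]
  have hcomm : ∀ n : DihedralGroup (2 * g),
      n * DihedralGroup.sr c = DihedralGroup.sr c * φ n := by
    intro n
    rw [hconj n, hmulform]
  refine ⟨?_, ?_, ?_⟩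
  · -- order is 2
    have hsq : ((x * z) ^ g) ^ 2 = 1 := by
      rw [hxzg, sq]
      ext
      · show DihedralGroup.sr c * (ψ X) (DihedralGroup.sr c) = 1
        rw [hψ, hφc, hsrc]
      · show X * X = 1
        exact hXX
    have hne : (x * z) ^ g ≠ 1 := by
      rw [hxzg]
      intro h
      have h2 : X = (1 : Multiplicative (ZMod 2)) := congrArg SemidirectProduct.right h
      exact absurd h2 (by decide)
    haveI : Fact (Nat.Prime 2) := ⟨Nat.prime_two⟩
    exact orderOf_eq_prime hsq hne
  · -- centrality
    rw [Subgroup.mem_center_iff]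
    intro u
    rw [hxzg]
    ext
    · show u.left * (ψ u.right) (DihedralGroup.sr c) =
        DihedralGroup.sr c * (ψ X) u.left
      rw [hψ]
      rcases he u.right with h | h <;> rw [h]
      · rw [map_one]
        show u.left * DihedralGroup.sr c = _
        exact hcomm u.left
      · rw [hψ, hφc]
        exact hcomm u.left
    · show u.right * X = X * u.right
      exact mul_comm _ _
  · -- the isomorphism
    set T : DihedralGroup (2 * g) := DihedralGroup.sr c with hTdef
    have hT2 : T * T = 1 := hsrc
    have hT2' : ∀ y : DihedralGroup (2 * g), T * (T * y) = y := by
      intro y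
      rw [← mul_assoc, hT2, one_mul]
    set v : Multiplicative (ZMod 2) → ℕ := fun e => (Multiplicative.toAdd e).val with hvdef
    have hv1 : v 1 = 0 := by decide
    have hvX : v X = 1 := by decide
    refine ⟨MulEquiv.mk ⟨fun u => (u.left * T ^ v u.right, u.right),
      fun p => ⟨p.1 * T ^ v p.2, p.2⟩, ?_, ?_⟩ ?_⟩
    · intro u
      ext
      · show u.left * T ^ v u.right * T ^ v u.right = u.left
        rcases he u.right with h | h <;> rw [h]
        · rw [hv1, pow_zero, mul_one, mul_one]
        · rw [hvX, pow_one, mul_assoc, hT2, mul_one]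
      · rfl
    · intro p
      ext
      · show p.1 * T ^ v p.2 * T ^ v p.2 = p.1
        rcases he p.2 with h | h <;> rw [h]
        · rw [hv1, pow_zero, mul_one, mul_one]
        · rw [hvX, pow_one, mul_assoc, hT2, mul_one]
      · rfl
    · intro a b
      have hr : (a * b).right = a.right * b.right := rfl
      ext
      · show (a.left * (ψ a.right) b.left) * T ^ v (a.right * b.right) =
          (a.left * T ^ v a.right) * (b.left * T ^ v b.right)
        rcases he a.right with ha | ha <;> rcases he b.right with hb | hb <;>
          rw [ha, hb] <;>
          simp only [map_one, MulAut.one_apply, hψ, one_mul, mul_one, hv1, hvX, hXX,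
            pow_zero, pow_one, hconj] <;>
          simp only [mul_assoc, hT2, hT2', mul_one, one_mul]
      · exact hr
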